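/- For any two countable measurable partitions B and C with finite w-th information moments, K_w(B ∨ C)^{1/w} ≤ K_w(B)^{1/w} + K_w(C)^{1/w}. -/

import Mathlib

open MeasureTheory

def IsCountablePartition {Ω : Type*} [MeasurableSpace Ω] (μ : Measure Ω)
    (B : ℕ → Set Ω) : Prop :=
  (∀ i, MeasurableSet (B i)) ∧ Pairwise (Function.onFun Disjoint B) ∧ μ (⋃ i, B i) = μ Set.univ

/-- `K_w(B) = Σ_B μ(B) |log μ(B)|^w`. -/
noncomputable def Kw {Ω : Type*} [MeasurableSpace Ω] (μ : Measure Ω) (w : ℝ)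
    (B : ℕ → Set Ω) : ℝ :=
  ∑' i, (μ (B i)).toReal * |Real.log (μ (B i)).toReal| ^ w

/-- `K_w(C|B) = Σ_{B,C} μ(B∩C) |log(μ(B∩C)/μ(B))|^w`. -/
noncomputable def KwCond {Ω : Type*} [MeasurableSpace Ω] (μ : Measure Ω) (w : ℝ)
    (B C : ℕ → Set Ω) : ℝ :=
  ∑' p : ℕ × ℕ, (μ (B p.1 ∩ C p.2)).toReal *
    |Real.log ((μ (B p.1 ∩ C p.2)).toReal / (μ (B p.1)).toReal)| ^ w

/-- `K_w(B ∨ C)` for the common refinement `B ∨ C = {B ∩ C}`. -/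
noncomputable def KwJoin {Ω : Type*} [MeasurableSpace Ω] (μ : Measure Ω) (w : ℝ)
    (B C : ℕ → Set Ω) : ℝ :=
  ∑' p : ℕ × ℕ, (μ (B p.1 ∩ C p.2)).toReal *
    |Real.log ((μ (B p.1 ∩ C p.2)).toReal)| ^ w

open scoped ENNReal

namespace JoinAux

noncomputable def psi (w x : ℝ) : ℝ := x ^ w - w * x ^ (w - 1)

noncomputable def Gfun (w a b : ℝ) : ℝ :=
  a ^ (w - 1) * ((a - w) * Real.exp (-b) + w * Real.exp (-a)) - Real.exp (-b) * b ^ w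

lemma haw {w a : ℝ} (ha : 0 < a) : a ^ (w - 1) * a = a ^ w := by
  have e : w - 1 + 1 = w := by ring
  have h := Real.rpow_add_one ha.ne' (w - 1)
  rw [e] at h
  linarith

lemma hasDerivAt_G {w a : ℝ} (hw : 1 ≤ w) (ha : 0 < a) (x : ℝ) :
    HasDerivAt (Gfun w a) (Real.exp (-x) * (psi w x - psi w a)) x := by
  have hexp : HasDerivAt (fun b : ℝ => Real.exp (-b)) (-Real.exp (-x)) x := by
    simpa using (hasDerivAt_neg x).exp
  have hpow : HasDerivAt (fun b : ℝ => b ^ w) (w * x ^ (w - 1)) x :=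
    Real.hasDerivAt_rpow_const (Or.inr hw)
  have h1 : HasDerivAt (fun b => a ^ (w - 1) * ((a - w) * Real.exp (-b) + w * Real.exp (-a)))
      (a ^ (w - 1) * ((a - w) * (-Real.exp (-x)))) x :=
    ((hexp.const_mul (a - w)).add_const (w * Real.exp (-a))).const_mul _
  have h2 : HasDerivAt (fun b => Real.exp (-b) * b ^ w)
      (-Real.exp (-x) * x ^ w + Real.exp (-x) * (w * x ^ (w - 1))) x := hexp.mul hpow
  have h := h1.sub h2
  refine HasDerivAt.congr_deriv h (Eq.symm ?_)
  have h3 := haw (w := w) ha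
  simp only [psi]
  linear_combination Real.exp (-x) * h3

lemma psi_hasDerivAt {w x : ℝ} (hx : x ≠ 0) :
    HasDerivAt (fun y => psi w y) (w * x ^ (w - 1) - w * ((w - 1) * x ^ (w - 1 - 1))) x := by
  have h1 : HasDerivAt (fun y : ℝ => y ^ w) (w * x ^ (w - 1)) x :=
    Real.hasDerivAt_rpow_const (Or.inl hx)
  have h2 : HasDerivAt (fun y : ℝ => y ^ (w - 1)) ((w - 1) * x ^ (w - 1 - 1)) x :=
    Real.hasDerivAt_rpow_const (Or.inl hx)
  exact h1.sub (h2.const_mul w)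

lemma psi_continuous {w : ℝ} (hw : 1 ≤ w) : Continuous (fun y => psi w y) := by
  rw [continuous_iff_continuousAt]
  intro x
  have h1 : ContinuousAt (fun y : ℝ => y ^ w) x :=
    Real.continuousAt_rpow_const x w (Or.inr (by linarith))
  have h2 : ContinuousAt (fun y : ℝ => y ^ (w - 1)) x :=
    Real.continuousAt_rpow_const x (w - 1) (Or.inr (by linarith))
  exact h1.sub (h2.const_mul w)

lemma psi_deriv_expand {w x : ℝ} (hx : 0 < x) :
    w * x ^ (w - 1) - w * ((w - 1) * x ^ (w - 1 - 1))
      = w * x ^ (w - 1 - 1) * (x - (w - 1)) := by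
  have e : w - 1 - 1 + 1 = w - 1 := by ring
  have key := Real.rpow_add_one hx.ne' (w - 1 - 1)
  rw [e] at key
  linear_combination w * key

lemma psi_mono {w : ℝ} (hw : 1 ≤ w) : MonotoneOn (fun y => psi w y) (Set.Ici (w - 1)) := by
  apply monotoneOn_of_deriv_nonneg (convex_Ici _) (psi_continuous hw).continuousOn
  · intro x hx
    rw [interior_Ici] at hx
    have hx0 : 0 < x := lt_of_le_of_lt (by linarith) hx
    exact ((psi_hasDerivAt hx0.ne').differentiableAt).differentiableWithinAt
  · intro x hx
    rw [interior_Ici] at hx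
    have hx0 : 0 < x := lt_of_le_of_lt (by linarith) hx
    rw [(psi_hasDerivAt hx0.ne').deriv, psi_deriv_expand hx0]
    exact mul_nonneg (mul_nonneg (by linarith) (Real.rpow_nonneg hx0.le _))
      (by simp only [Set.mem_Ioi] at hx; linarith)

lemma psi_anti {w : ℝ} (hw : 1 ≤ w) : AntitoneOn (fun y => psi w y) (Set.Icc 0 (w - 1)) := by
  apply antitoneOn_of_deriv_nonpos (convex_Icc _ _) (psi_continuous hw).continuousOn
  · intro x hx
    rw [interior_Icc] at hx
    exact ((psi_hasDerivAt hx.1.ne').differentiableAt).differentiableWithinAt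
  · intro x hx
    rw [interior_Icc] at hx
    obtain ⟨hx0, hx1⟩ := hx
    rw [(psi_hasDerivAt hx0.ne').deriv, psi_deriv_expand hx0]
    exact mul_nonpos_of_nonneg_of_nonpos
      (mul_nonneg (by linarith) (Real.rpow_nonneg hx0.le _)) (by linarith)

lemma G_cont {w a : ℝ} (hw : 1 ≤ w) (ha : 0 < a) : Continuous (Gfun w a) := by
  have hd : Differentiable ℝ (Gfun w a) := fun x => (hasDerivAt_G hw ha x).differentiableAt
  exact hd.continuous

lemma G_a {w a : ℝ} (ha : 0 < a) : Gfun w a a = 0 := by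
  have h := haw (w := w) ha
  simp only [Gfun]
  linear_combination Real.exp (-a) * h

lemma G_nonneg {w a b : ℝ} (hw : 1 ≤ w) (ha : w ≤ a) (hb : 0 ≤ b) : 0 ≤ Gfun w a b := by
  have hw0 : (0:ℝ) < w := by linarith
  have ha0 : (0:ℝ) < a := by linarith
  have haw1 : w - 1 ≤ a := by linarith
  have hcont := G_cont hw ha0
  have keyB : ∀ x ∈ Set.Icc (w - 1) a, 0 ≤ Gfun w a x := by
    intro x hxmem
    have hanti : AntitoneOn (Gfun w a) (Set.Icc (w - 1) a) := by
      apply antitoneOn_of_deriv_nonpos (convex_Icc _ _) hcont.continuousOn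
      · exact fun y _ => (hasDerivAt_G hw ha0 y).differentiableAt.differentiableWithinAt
      · intro y hy
        rw [interior_Icc] at hy
        rw [(hasDerivAt_G hw ha0 y).deriv]
        have hpsile : psi w y ≤ psi w a :=
          psi_mono hw (Set.mem_Ici.mpr hy.1.le) (Set.mem_Ici.mpr haw1) hy.2.le
        exact mul_nonpos_of_nonneg_of_nonpos (Real.exp_pos _).le (by linarith)
    have := hanti hxmem (Set.mem_Icc.mpr ⟨haw1, le_refl a⟩) hxmem.2
    rw [G_a ha0] at this
    linarith
  rcases le_or_gt a b with hab | hab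
  · have hmono : MonotoneOn (Gfun w a) (Set.Icc a b) := by
      apply monotoneOn_of_deriv_nonneg (convex_Icc _ _) hcont.continuousOn
      · exact fun y _ => (hasDerivAt_G hw ha0 y).differentiableAt.differentiableWithinAt
      · intro y hy
        rw [interior_Icc] at hy
        rw [(hasDerivAt_G hw ha0 y).deriv]
        have hpsile : psi w a ≤ psi w y :=
          psi_mono hw (Set.mem_Ici.mpr haw1) (Set.mem_Ici.mpr (by linarith [hy.1])) hy.1.le
        exact mul_nonneg (Real.exp_pos _).le (by linarith)
    have := hmono (Set.mem_Icc.mpr ⟨le_refl a, hab⟩) (Set.mem_Icc.mpr ⟨hab, le_refl b⟩) hab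
    rw [G_a ha0] at this
    linarith
  rcases le_or_gt (w - 1) b with hwb | hwb
  · exact keyB b (Set.mem_Icc.mpr ⟨hwb, hab.le⟩)
  rcases le_or_gt (psi w b) (psi w a) with hpb | hpb
  · have hanti : AntitoneOn (Gfun w a) (Set.Icc b (w - 1)) := by
      apply antitoneOn_of_deriv_nonpos (convex_Icc _ _) hcont.continuousOn
      · exact fun y _ => (hasDerivAt_G hw ha0 y).differentiableAt.differentiableWithinAt
      · intro y hy
        rw [interior_Icc] at hy
        rw [(hasDerivAt_G hw ha0 y).deriv]
        have h1 : psi w y ≤ psi w b :=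
          psi_anti hw (Set.mem_Icc.mpr ⟨hb, hwb.le⟩)
            (Set.mem_Icc.mpr ⟨by linarith [hy.1], hy.2.le⟩) hy.1.le
        exact mul_nonpos_of_nonneg_of_nonpos (Real.exp_pos _).le (by linarith)
    have h1 := hanti (Set.mem_Icc.mpr ⟨le_refl b, hwb.le⟩)
      (Set.mem_Icc.mpr ⟨hwb.le, le_refl _⟩) hwb.le
    have h2 := keyB (w - 1) (Set.mem_Icc.mpr ⟨le_refl _, haw1⟩)
    linarith
  · have hmono : MonotoneOn (Gfun w a) (Set.Icc 0 b) := by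
      apply monotoneOn_of_deriv_nonneg (convex_Icc _ _) hcont.continuousOn
      · exact fun y _ => (hasDerivAt_G hw ha0 y).differentiableAt.differentiableWithinAt
      · intro y hy
        rw [interior_Icc] at hy
        rw [(hasDerivAt_G hw ha0 y).deriv]
        have h1 : psi w b ≤ psi w y :=
          psi_anti hw (Set.mem_Icc.mpr ⟨hy.1.le, by linarith [hy.2]⟩)
            (Set.mem_Icc.mpr ⟨hb, hwb.le⟩) hy.2.le
        exact mul_nonneg (Real.exp_pos _).le (by linarith)
    have h1 := hmono (Set.mem_Icc.mpr ⟨le_refl 0, hb⟩) (Set.mem_Icc.mpr ⟨hb, le_refl b⟩) hb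
    have h2 : 0 ≤ Gfun w a 0 := by
      simp only [Gfun, neg_zero, Real.exp_zero]
      rw [Real.zero_rpow hw0.ne']
      have h3 : (0:ℝ) ≤ a ^ (w - 1) := Real.rpow_nonneg ha0.le _
      have h4 := (Real.exp_pos (-a)).le
      have h5 : (0:ℝ) ≤ (a - w) * 1 + w * Real.exp (-a) := by nlinarith
      nlinarith [mul_nonneg h3 h5]
    linarith

lemma key_ineq {w a b : ℝ} (hw : 1 ≤ w) (ha : w ≤ a) (hb : 0 ≤ b) :
    Real.exp (-b) * b ^ w ≤ a ^ (w - 1) * ((a - w) * Real.exp (-b) + w * Real.exp (-a)) := by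
  have := G_nonneg hw ha hb
  simp only [Gfun] at this
  linarith

lemma tangent {w c r : ℝ} (hw : 1 ≤ w) (hc : 0 < c) (hcw : Real.log c ≤ -w)
    (hr0 : 0 ≤ r) (hr1 : r ≤ 1) :
    r * (-Real.log r) ^ w ≤
      c * (-Real.log c) ^ w
        + ((-Real.log c) ^ (w - 1) * ((-Real.log c) - w)) * (r - c) := by
  set a := -Real.log c with hadef
  have hwa : w ≤ a := by simp only [hadef]; linarith
  have ha0 : 0 < a := by linarith
  have hca : Real.exp (-a) = c := by
    simp only [hadef, neg_neg]; exact Real.exp_log hc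
  have hawmul : a ^ (w - 1) * a = a ^ w := JoinAux.haw ha0
  rcases eq_or_lt_of_le hr0 with hr | hr
  · rw [← hr]
    simp only [Real.log_zero, neg_zero, zero_mul]
    have h1 : c * a ^ w + a ^ (w - 1) * (a - w) * (0 - c) = c * (w * a ^ (w - 1)) := by
      linear_combination (-c) * hawmul
    have h2 : (0:ℝ) ≤ c * (w * a ^ (w - 1)) := by positivity
    linarith
  · set b := -Real.log r with hbdef
    have hb0 : 0 ≤ b := by
      simp only [hbdef]
      linarith [Real.log_nonpos hr0 hr1]
    have hrb : Real.exp (-b) = r := by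
      simp only [hbdef, neg_neg]; exact Real.exp_log hr
    have hkey := key_ineq hw hwa hb0
    rw [hrb, hca] at hkey
    calc r * b ^ w ≤ a ^ (w - 1) * ((a - w) * r + w * c) := hkey
      _ = c * a ^ w + a ^ (w - 1) * (a - w) * (r - c) := by linear_combination c * hawmul

lemma sum_inter {Ω : Type*} [MeasurableSpace Ω] (μ : Measure Ω) [IsProbabilityMeasure μ]
    {B : ℕ → Set Ω} (hB : IsCountablePartition μ B) {s : Set Ω} (hs : MeasurableSet s) :
    ∑' i, μ (B i ∩ s) = μ s := by
  have hd : Pairwise (Function.onFun Disjoint fun i => B i ∩ s) := fun i i' h =>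
    Disjoint.mono Set.inter_subset_left Set.inter_subset_left (hB.2.1 h)
  have hmeas : ∀ i, MeasurableSet (B i ∩ s) := fun i => (hB.1 i).inter hs
  have hcompl : μ (⋃ i, B i)ᶜ = 0 := by
    rw [measure_compl (MeasurableSet.iUnion hB.1) (measure_ne_top μ _), hB.2.2]
    simp
  calc ∑' i, μ (B i ∩ s) = μ (⋃ i, B i ∩ s) := (measure_iUnion hd hmeas).symm
    _ = μ ((⋃ i, B i) ∩ s) := by rw [Set.iUnion_inter]
    _ = μ (s ∩ ⋃ i, B i) := by rw [Set.inter_comm]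
    _ = μ s := measure_inter_conull hcompl

lemma sum_partition {Ω : Type*} [MeasurableSpace Ω] (μ : Measure Ω) [IsProbabilityMeasure μ]
    {B : ℕ → Set Ω} (hB : IsCountablePartition μ B) : ∑' i, μ (B i) = 1 := by
  rw [← measure_iUnion hB.2.1 hB.1, hB.2.2, measure_univ]

lemma cond_bound {Ω : Type*} [MeasurableSpace Ω] (μ : Measure Ω) [IsProbabilityMeasure μ]
    {w : ℝ} (hw : 1 ≤ w) {B C : ℕ → Set Ω}
    (hB : IsCountablePartition μ B) (hC : IsCountablePartition μ C)
    (hCsmall : ∀ i, μ (C i) ≤ ENNReal.ofReal (Real.exp (-w))) (j : ℕ) :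
    ∑' i, μ (B i ∩ C j) *
        ENNReal.ofReal (|Real.log ((μ (B i ∩ C j)).toReal / (μ (B i)).toReal)| ^ w)
      ≤ μ (C j) * ENNReal.ofReal (|Real.log (μ (C j)).toReal| ^ w) := by
  by_cases hc0 : μ (C j) = 0
  · have hz : ∀ i, μ (B i ∩ C j) = 0 := fun i =>
      measure_mono_null Set.inter_subset_right hc0
    simp [hz, hc0]
  · have hfin : μ (C j) ≠ ⊤ := measure_ne_top μ _
    set c := (μ (C j)).toReal with hcdef
    have hce : μ (C j) = ENNReal.ofReal c := (ENNReal.ofReal_toReal hfin).symm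
    have hcpos : 0 < c := ENNReal.toReal_pos hc0 hfin
    have hc1 : c ≤ Real.exp (-w) :=
      ENNReal.toReal_le_of_le_ofReal (Real.exp_pos _).le (hCsmall j)
    have hlogc : Real.log c ≤ -w := by
      calc Real.log c ≤ Real.log (Real.exp (-w)) :=
            (Real.log_le_log_iff hcpos (Real.exp_pos _)).mpr hc1
        _ = -w := Real.log_exp _
    have hlogc0 : Real.log c < 0 := by linarith
    have habs : |Real.log c| = -Real.log c := abs_of_neg hlogc0
    have hlc0 : (0:ℝ) ≤ -Real.log c := by linarith
    set d := (-Real.log c) ^ (w - 1) * ((-Real.log c) - w) with hddef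
    have hd0 : 0 ≤ d := mul_nonneg (Real.rpow_nonneg hlc0 _) (by linarith)
    have hpt : ∀ i, μ (B i ∩ C j) *
          ENNReal.ofReal (|Real.log ((μ (B i ∩ C j)).toReal / (μ (B i)).toReal)| ^ w)
          + μ (B i) * ENNReal.ofReal (d * c)
        ≤ μ (B i) * ENNReal.ofReal (c * |Real.log c| ^ w)
          + ENNReal.ofReal d * μ (B i ∩ C j) := by
      intro i
      have hmfin : μ (B i ∩ C j) ≠ ⊤ := measure_ne_top μ _
      have hpfin : μ (B i) ≠ ⊤ := measure_ne_top μ _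
      set mv := (μ (B i ∩ C j)).toReal with hmdef
      set pv := (μ (B i)).toReal with hpdef
      have e1 : μ (B i ∩ C j) = ENNReal.ofReal mv := (ENNReal.ofReal_toReal hmfin).symm
      have e2 : μ (B i) = ENNReal.ofReal pv := (ENNReal.ofReal_toReal hpfin).symm
      have hm0 : 0 ≤ mv := ENNReal.toReal_nonneg
      have hp0 : 0 ≤ pv := ENNReal.toReal_nonneg
      have hmp : mv ≤ pv := ENNReal.toReal_mono hpfin (measure_mono Set.inter_subset_left)
      have habsw : (0:ℝ) ≤ |Real.log (mv / pv)| ^ w := Real.rpow_nonneg (abs_nonneg _) _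
      have habsw2 : (0:ℝ) ≤ |Real.log c| ^ w := Real.rpow_nonneg (abs_nonneg _) _
      have hreal : mv * |Real.log (mv / pv)| ^ w + pv * (d * c)
          ≤ pv * (c * |Real.log c| ^ w) + d * mv := by
        rcases eq_or_lt_of_le hm0 with hm | hm
        · have hdw : d ≤ |Real.log c| ^ w := by
            rw [habs]
            calc d ≤ (-Real.log c) ^ (w - 1) * (-Real.log c) := by
                  apply mul_le_mul_of_nonneg_left _ (Real.rpow_nonneg hlc0 _)
                  linarith
              _ = (-Real.log c) ^ w := haw (by linarith)
          rw [← hm]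
          have h2 : pv * (d * c) ≤ pv * (c * |Real.log c| ^ w) := by
            apply mul_le_mul_of_nonneg_left _ hp0
            nlinarith
          nlinarith
        · have hppos : 0 < pv := lt_of_lt_of_le hm hmp
          have hr0 : 0 < mv / pv := div_pos hm hppos
          have hr1 : mv / pv ≤ 1 := div_le_one_of_le₀ hmp hp0
          have htan := tangent hw hcpos hlogc hr0.le hr1
          have habsr : |Real.log (mv / pv)| = -Real.log (mv / pv) :=
            abs_of_nonpos (Real.log_nonpos hr0.le hr1)
          have hub : pv * (mv / pv) = mv := by field_simp
          rw [habsr, habs, hddef]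
          have key : mv * (-Real.log (mv / pv)) ^ w
              ≤ pv * (c * (-Real.log c) ^ w)
                + ((-Real.log c) ^ (w - 1) * (-Real.log c - w)) * (mv - pv * c) := by
            calc mv * (-Real.log (mv / pv)) ^ w
                = pv * (mv / pv * (-Real.log (mv / pv)) ^ w) := by
                  linear_combination (-((-Real.log (mv / pv)) ^ w)) * hub
              _ ≤ pv * (c * (-Real.log c) ^ w
                    + (-Real.log c) ^ (w - 1) * (-Real.log c - w) * (mv / pv - c)) :=
                  mul_le_mul_of_nonneg_left htan hppos.le
              _ = pv * (c * (-Real.log c) ^ w)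
                  + ((-Real.log c) ^ (w - 1) * (-Real.log c - w)) * (mv - pv * c) := by
                  linear_combination ((-Real.log c) ^ (w - 1) * (-Real.log c - w)) * hub
          linarith [key]
      have lhs_eq : μ (B i ∩ C j) * ENNReal.ofReal (|Real.log (mv / pv)| ^ w)
          + μ (B i) * ENNReal.ofReal (d * c)
          = ENNReal.ofReal (mv * |Real.log (mv / pv)| ^ w + pv * (d * c)) := by
        rw [e1, e2, ← ENNReal.ofReal_mul hm0, ← ENNReal.ofReal_mul hp0,
          ← ENNReal.ofReal_add (mul_nonneg hm0 habsw)
            (mul_nonneg hp0 (mul_nonneg hd0 hcpos.le))]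
      have rhs_eq : μ (B i) * ENNReal.ofReal (c * |Real.log c| ^ w)
          + ENNReal.ofReal d * μ (B i ∩ C j)
          = ENNReal.ofReal (pv * (c * |Real.log c| ^ w) + d * mv) := by
        rw [e1, e2, ← ENNReal.ofReal_mul hp0, ← ENNReal.ofReal_mul hd0,
          ← ENNReal.ofReal_add (mul_nonneg hp0 (mul_nonneg hcpos.le habsw2))
            (mul_nonneg hd0 hm0)]
      rw [lhs_eq, rhs_eq]
      exact ENNReal.ofReal_le_ofReal hreal
    have hsum := ENNReal.tsum_le_tsum hpt
    rw [ENNReal.tsum_add, ENNReal.tsum_add, ENNReal.tsum_mul_right, ENNReal.tsum_mul_right,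
      ENNReal.tsum_mul_left, sum_partition μ hB, one_mul,
      sum_inter μ hB (hC.1 j)] at hsum
    have hRc : ENNReal.ofReal d * μ (C j) = ENNReal.ofReal (d * c) := by
      rw [hce, ← ENNReal.ofReal_mul hd0]
    rw [hRc] at hsum
    have hfinal := (ENNReal.add_le_add_iff_right ENNReal.ofReal_ne_top).mp hsum
    rw [one_mul] at hfinal
    calc ∑' i, μ (B i ∩ C j) *
          ENNReal.ofReal (|Real.log ((μ (B i ∩ C j)).toReal / (μ (B i)).toReal)| ^ w)
        ≤ ENNReal.ofReal (c * |Real.log c| ^ w) := hfinal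
      _ = μ (C j) * ENNReal.ofReal (|Real.log c| ^ w) := by
          rw [ENNReal.ofReal_mul hcpos.le, ← hce]

end JoinAux

theorem join_moment_le_sum {Ω : Type*} [MeasurableSpace Ω]
    (μ : Measure Ω) [IsProbabilityMeasure μ] (w : ℝ) (hw : 1 ≤ w)
    (B C : ℕ → Set Ω)
    (hB : IsCountablePartition μ B) (hC : IsCountablePartition μ C)
    (hBsmall : ∀ i, μ (B i) ≤ ENNReal.ofReal (Real.exp (-w)))
    (hCsmall : ∀ i, μ (C i) ≤ ENNReal.ofReal (Real.exp (-w)))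
    (hKB : Summable fun i => (μ (B i)).toReal * |Real.log (μ (B i)).toReal| ^ w)
    (hKC : Summable fun i => (μ (C i)).toReal * |Real.log (μ (C i)).toReal| ^ w) :
    KwJoin μ w B C ^ (1 / w) ≤ Kw μ w C ^ (1 / w) + Kw μ w B ^ (1 / w) := by
  have hw0 : (0:ℝ) < w := by linarith
  have h1w : (0:ℝ) < 1 / w := by positivity
  -- ENNReal sums
  set SJ : ℝ≥0∞ := ∑' p : ℕ × ℕ, μ (B p.1 ∩ C p.2) *
    ENNReal.ofReal (|Real.log ((μ (B p.1 ∩ C p.2)).toReal)| ^ w) with hSJdef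
  set SG : ℝ≥0∞ := ∑' p : ℕ × ℕ, μ (B p.1 ∩ C p.2) *
    ENNReal.ofReal (|Real.log ((μ (B p.1)).toReal)| ^ w) with hSGdef
  set SH : ℝ≥0∞ := ∑' p : ℕ × ℕ, μ (B p.1 ∩ C p.2) *
    ENNReal.ofReal (|Real.log ((μ (B p.1 ∩ C p.2)).toReal / (μ (B p.1)).toReal)| ^ w) with hSHdef
  set EB : ℝ≥0∞ := ∑' i, μ (B i) * ENNReal.ofReal (|Real.log (μ (B i)).toReal| ^ w) with hEBdef
  set EC : ℝ≥0∞ := ∑' j, μ (C j) * ENNReal.ofReal (|Real.log (μ (C j)).toReal| ^ w) with hECdef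
  -- EB = ofReal (Kw B)
  have hterm : ∀ (s : Set Ω), μ s * ENNReal.ofReal (|Real.log (μ s).toReal| ^ w)
      = ENNReal.ofReal ((μ s).toReal * |Real.log (μ s).toReal| ^ w) := by
    intro s
    rw [ENNReal.ofReal_mul ENNReal.toReal_nonneg, ENNReal.ofReal_toReal (measure_ne_top μ s)]
  have hEB : EB = ENNReal.ofReal (Kw μ w B) := by
    rw [hEBdef, Kw, ENNReal.ofReal_tsum_of_nonneg
      (fun i => mul_nonneg ENNReal.toReal_nonneg (Real.rpow_nonneg (abs_nonneg _) _)) hKB]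
    exact tsum_congr fun i => hterm (B i)
  have hEC : EC = ENNReal.ofReal (Kw μ w C) := by
    rw [hECdef, Kw, ENNReal.ofReal_tsum_of_nonneg
      (fun i => mul_nonneg ENNReal.toReal_nonneg (Real.rpow_nonneg (abs_nonneg _) _)) hKC]
    exact tsum_congr fun j => hterm (C j)
  -- Minkowski
  have hpowid : ∀ (x : ℝ≥0∞) (y : ℝ), 0 ≤ y →
      (x ^ (1/w) * ENNReal.ofReal y) ^ w = x * ENNReal.ofReal (y ^ w) := by
    intro x y hy
    rw [ENNReal.mul_rpow_of_nonneg _ _ hw0.le, ← ENNReal.rpow_mul,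
      one_div_mul_cancel hw0.ne', ENNReal.rpow_one,
      ENNReal.ofReal_rpow_of_nonneg hy hw0.le]
  have hrow : ∀ i, ∑' j, μ (B i ∩ C j) = μ (B i) := by
    intro i
    have h := JoinAux.sum_inter μ hC (hB.1 i)
    rw [← h]
    exact tsum_congr fun j => by rw [Set.inter_comm]
  have hmink : SJ ^ (1/w) ≤ SG ^ (1/w) + SH ^ (1/w) := by
    set F : ℕ × ℕ → ℝ≥0∞ := fun p => (μ (B p.1 ∩ C p.2)) ^ (1/w) *
      ENNReal.ofReal (|Real.log ((μ (B p.1)).toReal)|) with hFdef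
    set G : ℕ × ℕ → ℝ≥0∞ := fun p => (μ (B p.1 ∩ C p.2)) ^ (1/w) *
      ENNReal.ofReal (|Real.log ((μ (B p.1 ∩ C p.2)).toReal / (μ (B p.1)).toReal)|) with hGdef
    have hlp := ENNReal.lintegral_Lp_add_le (μ := (Measure.count : Measure (ℕ × ℕ)))
      (measurable_of_countable F).aemeasurable (measurable_of_countable G).aemeasurable hw
    rw [lintegral_count, lintegral_count, lintegral_count] at hlp
    have hFG : ∀ p : ℕ × ℕ, (μ (B p.1 ∩ C p.2)) ^ (1/w) *
        ENNReal.ofReal (|Real.log ((μ (B p.1 ∩ C p.2)).toReal)|) ≤ F p + G p := by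
      intro p
      by_cases hm : μ (B p.1 ∩ C p.2) = 0
      · rw [hm, ENNReal.zero_rpow_of_pos h1w, zero_mul]
        exact zero_le
      · have hmfin : μ (B p.1 ∩ C p.2) ≠ ⊤ := measure_ne_top μ _
        have hpfin : μ (B p.1) ≠ ⊤ := measure_ne_top μ _
        have hmr : 0 < (μ (B p.1 ∩ C p.2)).toReal := ENNReal.toReal_pos hm hmfin
        have hmp : (μ (B p.1 ∩ C p.2)).toReal ≤ (μ (B p.1)).toReal :=
          ENNReal.toReal_mono hpfin (measure_mono Set.inter_subset_left)
        have hpp : 0 < (μ (B p.1)).toReal := lt_of_lt_of_le hmr hmp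
        have hp1 : (μ (B p.1)).toReal ≤ 1 := by
          have h := ENNReal.toReal_mono (by simp) (prob_le_one (μ := μ) (s := B p.1))
          simpa using h
        have hm1 : (μ (B p.1 ∩ C p.2)).toReal ≤ 1 := le_trans hmp hp1
        have habseq : |Real.log ((μ (B p.1 ∩ C p.2)).toReal)|
            = |Real.log ((μ (B p.1)).toReal)|
              + |Real.log ((μ (B p.1 ∩ C p.2)).toReal / (μ (B p.1)).toReal)| := by
          rw [abs_of_nonpos (Real.log_nonpos hmr.le hm1),
            abs_of_nonpos (Real.log_nonpos hpp.le hp1),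
            abs_of_nonpos (Real.log_nonpos (div_pos hmr hpp).le (div_le_one_of_le₀ hmp hpp.le)),
            Real.log_div hmr.ne' hpp.ne']
          ring
        rw [habseq, ENNReal.ofReal_add (abs_nonneg _) (abs_nonneg _), mul_add]
    calc SJ ^ (1/w)
        = (∑' p : ℕ × ℕ, ((μ (B p.1 ∩ C p.2)) ^ (1/w) *
            ENNReal.ofReal (|Real.log ((μ (B p.1 ∩ C p.2)).toReal)|)) ^ w) ^ (1/w) := by
          rw [hSJdef]
          congr 1
          exact tsum_congr fun p => (hpowid _ _ (abs_nonneg _)).symm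
      _ ≤ (∑' p : ℕ × ℕ, (F p + G p) ^ w) ^ (1/w) := by
          apply ENNReal.rpow_le_rpow _ h1w.le
          exact ENNReal.tsum_le_tsum fun p => ENNReal.rpow_le_rpow (hFG p) hw0.le
      _ ≤ (∑' p : ℕ × ℕ, F p ^ w) ^ (1/w) + (∑' p : ℕ × ℕ, G p ^ w) ^ (1/w) := hlp
      _ = SG ^ (1/w) + SH ^ (1/w) := by
          rw [hSGdef, hSHdef]
          congr 1
          · congr 1
            exact tsum_congr fun p => hpowid _ _ (abs_nonneg _)
          · congr 1
            exact tsum_congr fun p => hpowid _ _ (abs_nonneg _)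
  -- SG = EB
  have hSGEB : SG = EB := by
    rw [hSGdef, hEBdef, ENNReal.tsum_prod']
    refine tsum_congr fun i => ?_
    have heq : (fun b : ℕ => μ (B (i, b).1 ∩ C (i, b).2) *
        ENNReal.ofReal (|Real.log (μ (B (i, b).1)).toReal| ^ w))
        = fun b : ℕ => μ (B i ∩ C b) * ENNReal.ofReal (|Real.log (μ (B i)).toReal| ^ w) := rfl
    rw [heq, ENNReal.tsum_mul_right, hrow i]
  -- SH ≤ EC
  have hSHEC : SH ≤ EC := by
    rw [hSHdef, hECdef, ENNReal.tsum_prod', ENNReal.tsum_comm]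
    refine ENNReal.tsum_le_tsum fun j => ?_
    exact JoinAux.cond_bound μ hw hB hC hCsmall j
  have hchain : SJ ^ (1/w) ≤ EC ^ (1/w) + EB ^ (1/w) := by
    calc SJ ^ (1/w) ≤ SG ^ (1/w) + SH ^ (1/w) := hmink
      _ ≤ EB ^ (1/w) + EC ^ (1/w) := by
          rw [hSGEB]
          exact add_le_add le_rfl (ENNReal.rpow_le_rpow hSHEC h1w.le)
      _ = EC ^ (1/w) + EB ^ (1/w) := add_comm _ _
  have hEBfin : EB ≠ ⊤ := by rw [hEB]; exact ENNReal.ofReal_ne_top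
  have hECfin : EC ≠ ⊤ := by rw [hEC]; exact ENNReal.ofReal_ne_top
  have hEBr : (EB ^ (1/w)) ≠ ⊤ := ENNReal.rpow_ne_top_of_nonneg h1w.le hEBfin
  have hECr : (EC ^ (1/w)) ≠ ⊤ := ENNReal.rpow_ne_top_of_nonneg h1w.le hECfin
  have hSJfin : SJ ≠ ⊤ := by
    intro htop
    rw [htop, ENNReal.top_rpow_of_pos h1w] at hchain
    exact (ENNReal.add_lt_top.mpr ⟨hECr.lt_top, hEBr.lt_top⟩).ne (top_le_iff.mp hchain)
  -- convert to reals
  have hKJ : KwJoin μ w B C = SJ.toReal := by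
    rw [hSJdef, ENNReal.tsum_toReal_eq
      (fun p => ENNReal.mul_ne_top (measure_ne_top μ _) ENNReal.ofReal_ne_top)]
    rw [KwJoin]
    exact tsum_congr fun p => by
      rw [ENNReal.toReal_mul, ENNReal.toReal_ofReal (Real.rpow_nonneg (abs_nonneg _) _)]
  have hKwB : Kw μ w B = EB.toReal := by
    rw [hEB, ENNReal.toReal_ofReal]
    exact tsum_nonneg fun i => mul_nonneg ENNReal.toReal_nonneg
      (Real.rpow_nonneg (abs_nonneg _) _)
  have hKwC : Kw μ w C = EC.toReal := by
    rw [hEC, ENNReal.toReal_ofReal]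
    exact tsum_nonneg fun i => mul_nonneg ENNReal.toReal_nonneg
      (Real.rpow_nonneg (abs_nonneg _) _)
  rw [hKJ, hKwB, hKwC, ENNReal.toReal_rpow, ENNReal.toReal_rpow, ENNReal.toReal_rpow,
    ← ENNReal.toReal_add hECr hEBr]
  exact ENNReal.toReal_mono (ENNReal.add_ne_top.mpr ⟨hECr, hEBr⟩) hchain
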